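/- Let L(n,k) be the set of lattice paths from (0,0) to (k, n−k) using steps (1,0) and (0,1) that never go above the diagonal x = y, where n−k ≤ k ≤ n−2. Then there exists an injection from L(n,k) × L(n,k+2) into L(n,k+1) × L(n,k+1); in particular |L(n,k)| · |L(n,k+2)| ≤ |L(n,k+1)|^2. -/

import Mathlib

/-- A lattice path from `(0,0)` to `(k, n−k)`, encoded as a list of `n` steps
(`true` = East step `(1,0)`, `false` = North step `(0,1)`) with `k` East steps,
that never goes above the diagonal `x = y`: every prefix has at least as many
East steps as North steps. -/
def IsLPath (n k : ℕ) (p : List Bool) : Prop :=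
  p.length = n ∧ p.count true = k ∧
  ∀ m : ℕ, (p.take m).count false ≤ (p.take m).count true

namespace LPathAux

lemma count_tf (l : List Bool) : l.count true + l.count false = l.length := by
  induction l with
  | nil => simp
  | cons a t ih => cases a <;> simp [List.count_cons] <;> omega

lemma count_take_tf (l : List Bool) (m : ℕ) :
    (l.take m).count true + (l.take m).count false = min m l.length := by
  rw [count_tf, List.length_take]

lemma count_take_mono (l : List Bool) (b : Bool) {m m' : ℕ} (h : m ≤ m') :
    (l.take m).count b ≤ (l.take m').count b := by
  have : (l.take m').take m = l.take m := by
    rw [List.take_take, min_eq_left h]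
  calc (l.take m).count b = ((l.take m').take m).count b := by rw [this]
    _ ≤ (l.take m').count b := (List.take_sublist _ _).count_le b

lemma count_take_succ_le (l : List Bool) (b : Bool) (m : ℕ) :
    (l.take (m+1)).count b ≤ (l.take m).count b + 1 := by
  rw [List.take_succ, List.count_append]
  have : (l[m]?.toList).count b ≤ (l[m]?.toList).length := List.count_le_length (a := b)
  have h2 : (l[m]?.toList).length ≤ 1 := by cases l[m]? <;> simp
  omega

/-- discrete intermediate value (upward). -/
lemma ivt (g : ℕ → ℤ) (hstep : ∀ i, g (i+1) ≤ g i + 1) (c : ℤ) :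
    ∀ N, g 0 ≤ c → c ≤ g N → ∃ m ≤ N, g m = c := by
  intro N
  induction N with
  | zero => intro h1 h2; exact ⟨0, le_refl _, le_antisymm h1 h2⟩
  | succ N ih =>
    intro h1 h2
    by_cases hc : c ≤ g N
    · obtain ⟨m, hm, hgm⟩ := ih h1 hc
      exact ⟨m, hm.trans (Nat.le_succ N), hgm⟩
    · push_neg at hc
      have := hstep N
      exact ⟨N+1, le_refl _, by omega⟩

section Main

variable {n k : ℕ} {p q : List Bool}

/-- the swap point -/
def M (p q : List Bool) : ℕ :=
  Nat.findGreatest (fun m => (q.take m).count true = (p.take m).count true + 1) p.length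

/-- the tail-swap map -/
def T (x : List Bool × List Bool) : List Bool × List Bool :=
  ((x.1.take (M x.1 x.2) ++ x.2.drop (M x.1 x.2)),
   (x.2.take (M x.1 x.2) ++ x.1.drop (M x.1 x.2)))

lemma key (hp : IsLPath n k p) (hq : IsLPath n (k+2) q) :
    IsLPath n (k+1) (T (p,q)).1 ∧ IsLPath n (k+1) (T (p,q)).2 ∧ T (T (p,q)) = (p,q) := by
  obtain ⟨hpl, hpc, hpd⟩ := hp
  obtain ⟨hql, hqc, hqd⟩ := hq
  have hAn : ∀ m, n ≤ m → (p.take m).count true = k := fun m hm => by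
    rw [List.take_of_length_le (by omega), hpc]
  have hBn : ∀ m, n ≤ m → (q.take m).count true = k + 2 := fun m hm => by
    rw [List.take_of_length_le (by omega), hqc]
  have hAtf : ∀ m, (p.take m).count true + (p.take m).count false = min m n := fun m => by
    have := count_take_tf p m; omega
  have hBtf : ∀ m, (q.take m).count true + (q.take m).count false = min m n := fun m => by
    have := count_take_tf q m; omega
  have hpD : ∀ m, min m n ≤ 2 * (p.take m).count true := fun m => by
    have h1 := hAtf m; have h2 := hpd m; omega
  have hqD : ∀ m, min m n ≤ 2 * (q.take m).count true := fun m => by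
    have h1 := hBtf m; have h2 := hqd m; omega
  have hk2n : k + 2 ≤ n := by
    have := (List.count_le_length (a := true) (l := q)); omega
  -- existence of a crossing point
  have hex : ∃ m ≤ n, (q.take m).count true = (p.take m).count true + 1 := by
    obtain ⟨m, hm, hgm⟩ := ivt
      (fun m => ((q.take m).count true : ℤ) - (p.take m).count true)
      (fun i => by
        show ((q.take (i+1)).count true : ℤ) - (p.take (i+1)).count true
          ≤ ((q.take i).count true : ℤ) - (p.take i).count true + 1
        have h1 := count_take_succ_le q true i
        have h2 := count_take_mono p true (by omega : i ≤ i + 1)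
        push_cast; omega) 1 n
      (by show ((q.take 0).count true : ℤ) - (p.take 0).count true ≤ 1; simp)
      (by show (1:ℤ) ≤ ((q.take n).count true : ℤ) - (p.take n).count true
          rw [hAn n le_rfl, hBn n le_rfl]; push_cast; omega)
    have hgm' : ((q.take m).count true : ℤ) - (p.take m).count true = 1 := hgm
    exact ⟨m, hm, by omega⟩
  obtain ⟨m₀, hm₀n, hm₀P⟩ := hex
  have hcP : (q.take (M p q)).count true = (p.take (M p q)).count true + 1 := by
    rw [M, hpl]
    exact Nat.findGreatest_spec
      (P := fun m => (q.take m).count true = (p.take m).count true + 1)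
      (m := m₀) (by omega) hm₀P
  have hcn : M p q ≤ n := by rw [M, ← hpl]; exact Nat.findGreatest_le _
  have hcmax : ∀ m, M p q < m → m ≤ n →
      ¬ ((q.take m).count true = (p.take m).count true + 1) := fun m hm1 hm2 => by
    rw [M, hpl] at hm1
    exact Nat.findGreatest_is_greatest
      (P := fun m => (q.take m).count true = (p.take m).count true + 1) hm1 hm2
  have hcltn : M p q < n := by
    rcases lt_or_eq_of_le hcn with h | h
    · exact h
    · exfalso
      rw [h] at hcP
      rw [hAn n le_rfl, hBn n le_rfl] at hcP; omega
  set c := M p q with hc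
  -- strictly above after the crossing
  have habove : ∀ m, c < m → m ≤ n →
      (p.take m).count true + 2 ≤ (q.take m).count true := by
    have key : ∀ j m, m + j = n → c < m →
        (p.take m).count true + 2 ≤ (q.take m).count true := by
      intro j
      induction j with
      | zero => intro m hm _; rw [show m = n by omega, hAn n le_rfl, hBn n le_rfl]
      | succ j ih =>
        intro m hm hcm
        have h1 := ih (m+1) (by omega) (by omega)
        have h2 := count_take_succ_le q true m
        have h3 := count_take_mono p true (by omega : m ≤ m + 1)
        have h4 := hcmax m hcm (by omega)
        omega
    intro m h1 h2; exact key (n - m) m (by omega) h1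
  -- basic count identities for prefixes of the swapped lists
  have hlenp : (p.take c).length = c := by rw [List.length_take]; omega
  have hlenq : (q.take c).length = c := by rw [List.length_take]; omega
  have hsplitp : ∀ m b, c ≤ m →
      (p.take c).count b + ((p.drop c).take (m - c)).count b = (p.take m).count b := by
    intro m b hcm
    rw [← List.count_append, ← List.take_add (i := c) (j := m - c)]
    congr 2; omega
  have hsplitq : ∀ m b, c ≤ m →
      (q.take c).count b + ((q.drop c).take (m - c)).count b = (q.take m).count b := by
    intro m b hcm
    rw [← List.count_append, ← List.take_add (i := c) (j := m - c)]
    congr 2; omega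
  -- prefix shapes of s and r
  have hstake : ∀ m, (p.take c ++ q.drop c).take m
      = p.take (min m c) ++ (q.drop c).take (m - c) := by
    intro m
    rw [List.take_append, List.take_take, hlenp]
  have hrtake : ∀ m, (q.take c ++ p.drop c).take m
      = q.take (min m c) ++ (p.drop c).take (m - c) := by
    intro m
    rw [List.take_append, List.take_take, hlenq]
  have hstake_le : ∀ m, m ≤ c → (p.take c ++ q.drop c).take m = p.take m := by
    intro m hm; rw [hstake m, min_eq_left hm, show m - c = 0 by omega]; simp
  have hrtake_le : ∀ m, m ≤ c → (q.take c ++ p.drop c).take m = q.take m := by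
    intro m hm; rw [hrtake m, min_eq_left hm, show m - c = 0 by omega]; simp
  have hslen : (p.take c ++ q.drop c).length = n := by
    rw [List.length_append, List.length_take, List.length_drop]; omega
  have hrlen : (q.take c ++ p.drop c).length = n := by
    rw [List.length_append, List.length_take, List.length_drop]; omega
  have hscount : ∀ m b, ((p.take c ++ q.drop c).take m).count b
      = (p.take (min m c)).count b + ((q.drop c).take (m - c)).count b := by
    intro m b; rw [hstake m, List.count_append]
  have hrcount : ∀ m b, ((q.take c ++ p.drop c).take m).count b
      = (q.take (min m c)).count b + ((p.drop c).take (m - c)).count b := by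
    intro m b; rw [hrtake m, List.count_append]
  -- diagonal condition for s
  have hsdiag : ∀ m, ((p.take c ++ q.drop c).take m).count false
      ≤ ((p.take c ++ q.drop c).take m).count true := by
    have main : ∀ m, m ≤ n → ((p.take c ++ q.drop c).take m).count false
        ≤ ((p.take c ++ q.drop c).take m).count true := by
      intro m hmn
      rcases le_or_gt m c with hmc | hmc
      · rw [hstake_le m hmc]; exact hpd m
      rw [hscount, hscount, min_eq_right (le_of_lt hmc)]
      have e1 := hsplitq m true (le_of_lt hmc)
      have e2 := hsplitq m false (le_of_lt hmc)
      have e3 := hAtf c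
      have e4 := hBtf c
      have e5 := hBtf m
      have e6 := habove m hmc hmn
      have e7 := hpD m
      omega
    intro m
    rcases le_or_gt m n with h | h
    · exact main m h
    · rw [List.take_of_length_le (by omega), ← List.take_of_length_le (le_of_eq hslen)]
      exact main n le_rfl
  -- diagonal condition for r
  have hrdiag : ∀ m, ((q.take c ++ p.drop c).take m).count false
      ≤ ((q.take c ++ p.drop c).take m).count true := by
    have main : ∀ m, m ≤ n → ((q.take c ++ p.drop c).take m).count false
        ≤ ((q.take c ++ p.drop c).take m).count true := by
      intro m hmn
      rcases le_or_gt m c with hmc | hmc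
      · rw [hrtake_le m hmc]; exact hqd m
      rw [hrcount, hrcount, min_eq_right (le_of_lt hmc)]
      have e1 := hsplitp m true (le_of_lt hmc)
      have e2 := hsplitp m false (le_of_lt hmc)
      have e3 := hAtf c
      have e4 := hBtf c
      have e5 := hAtf m
      have e7 := hpD m
      omega
    intro m
    rcases le_or_gt m n with h | h
    · exact main m h
    · rw [List.take_of_length_le (by omega), ← List.take_of_length_le (le_of_eq hrlen)]
      exact main n le_rfl
  -- total counts
  have hscnt : (p.take c ++ q.drop c).count true = k + 1 := by
    have e1 := hsplitq n true hcn
    rw [List.count_append]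
    have e2 : ((q.drop c).take (n - c)).count true = (q.drop c).count true := by
      congr 1; apply List.take_of_length_le; rw [List.length_drop]; omega
    rw [List.take_of_length_le (le_of_eq hql)] at e1
    omega
  have hrcnt : (q.take c ++ p.drop c).count true = k + 1 := by
    have e1 := hsplitp n true hcn
    rw [List.count_append]
    have e2 : ((p.drop c).take (n - c)).count true = (p.drop c).count true := by
      congr 1; apply List.take_of_length_le; rw [List.length_drop]; omega
    rw [List.take_of_length_le (le_of_eq hpl)] at e1
    omega
  have hs : IsLPath n (k+1) (p.take c ++ q.drop c) := ⟨hslen, hscnt, hsdiag⟩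
  have hr : IsLPath n (k+1) (q.take c ++ p.drop c) := ⟨hrlen, hrcnt, hrdiag⟩
  -- M of the swapped pair is c again
  have hMsr : M (p.take c ++ q.drop c) (q.take c ++ p.drop c) = c := by
    rw [M, hslen]
    rw [Nat.findGreatest_eq_iff]
    refine ⟨hcn, fun _ => ?_, fun m h1 h2 => ?_⟩
    · rw [hstake_le c le_rfl, hrtake_le c le_rfl]; exact hcP
    · rw [hscount, hrcount, min_eq_right (by omega)]
      have e1 := hsplitq m true (by omega)
      have e2 := hsplitp m true (by omega)
      have e6 := habove m h1 h2
      omega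
  refine ⟨hs, hr, ?_⟩
  simp only [T, hMsr, ← hc]
  have t1 : (p.take c ++ q.drop c).take c = p.take c := List.take_left' hlenp
  have t2 : (q.take c ++ p.drop c).take c = q.take c := List.take_left' hlenq
  have t3 : (p.take c ++ q.drop c).drop c = q.drop c := List.drop_left' hlenp
  have t4 : (q.take c ++ p.drop c).drop c = p.drop c := List.drop_left' hlenq
  rw [t1, t2, t3, t4, List.take_append_drop, List.take_append_drop]

end Main

lemma finite_lpath (n k : ℕ) : Finite {p : List Bool // IsLPath n k p} := by
  have h : {p : List Bool | IsLPath n k p} ⊆ {l : List Bool | l.length = n} := by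
    intro l hl; exact hl.1
  exact ((List.finite_length_eq Bool n).subset h).to_subtype

end LPathAux

theorem lattice_path_injection (n k : ℕ) (h1 : n - k ≤ k) (h2 : k ≤ n - 2) :
    (∃ f : {p : List Bool // IsLPath n k p} × {p : List Bool // IsLPath n (k + 2) p} →
        {p : List Bool // IsLPath n (k + 1) p} × {p : List Bool // IsLPath n (k + 1) p},
      Function.Injective f) ∧
    Nat.card {p : List Bool // IsLPath n k p} *
        Nat.card {p : List Bool // IsLPath n (k + 2) p} ≤
      Nat.card {p : List Bool // IsLPath n (k + 1) p} ^ 2 := by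
  open LPathAux in
  have hf : ∃ f : {p : List Bool // IsLPath n k p} × {p : List Bool // IsLPath n (k + 2) p} →
        {p : List Bool // IsLPath n (k + 1) p} × {p : List Bool // IsLPath n (k + 1) p},
      Function.Injective f := by
    refine ⟨fun x => (⟨(T (x.1.1, x.2.1)).1, (key x.1.2 x.2.2).1⟩,
                      ⟨(T (x.1.1, x.2.1)).2, (key x.1.2 x.2.2).2.1⟩), ?_⟩
    rintro ⟨⟨p, hp⟩, ⟨q, hq⟩⟩ ⟨⟨p', hp'⟩, ⟨q', hq'⟩⟩ h
    simp only [Prod.mk.injEq, Subtype.mk.injEq] at h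
    have hT : T (p, q) = T (p', q') := Prod.ext h.1 h.2
    have e1 := (key hp hq).2.2
    have e2 := (key hp' hq').2.2
    rw [hT, e2] at e1
    simp only [Prod.mk.injEq] at e1
    simp [Prod.ext_iff, Subtype.ext_iff, e1.1, e1.2]
  refine ⟨hf, ?_⟩
  obtain ⟨f, hfinj⟩ := hf
  have := LPathAux.finite_lpath n k
  have := LPathAux.finite_lpath n (k+1)
  have := LPathAux.finite_lpath n (k+2)
  calc Nat.card {p : List Bool // IsLPath n k p} *
        Nat.card {p : List Bool // IsLPath n (k + 2) p}
      = Nat.card ({p : List Bool // IsLPath n k p} ×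
          {p : List Bool // IsLPath n (k + 2) p}) := (Nat.card_prod _ _).symm
    _ ≤ Nat.card ({p : List Bool // IsLPath n (k + 1) p} ×
          {p : List Bool // IsLPath n (k + 1) p}) := Nat.card_le_card_of_injective f hfinj
    _ = Nat.card {p : List Bool // IsLPath n (k + 1) p} ^ 2 := by
        rw [Nat.card_prod, sq]
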